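/- Let α > 0, φ ∈ ω_{α,loc}, X a complex Banach space and T a bounded linear operator on X such that ‖Δ^{-α}𝒯(n)‖ ≤ C·φ(n) for all n ∈ ℕ₀ and some C > 0, and let θ(f) := ∑_{n=0}^∞ W^α f(n)·Δ^{-α}𝒯(n) for finitely supported f : ℕ₀ → ℂ. Then for every finitely supported f and every x ∈ X: T·θ(Δf)x = (I − T)·θ(f)x − f(0)·x, where Δf(n) = f(n+1) − f(n). -/

import Mathlib

open Finset


/-- The Cesàro kernel `k^α(n) = Γ(n+α)/(Γ(α)·Γ(n+1))`. -/
noncomputable def cesK (α : ℝ) (n : ℕ) : ℝ :=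
  Real.Gamma ((n : ℝ) + α) / (Real.Gamma α * Real.Gamma ((n : ℝ) + 1))

/-- `φ` belongs to the class `ω_{α,loc}` with constant `c`. -/
def omegaLoc (α : ℝ) (φ : ℕ → ℝ) (c : ℝ) : Prop :=
  ∀ j p : ℕ, 1 ≤ j → j ≤ p →
    ((∑ n ∈ Finset.range (j + 1), cesK α n * φ (j + p - n)) +
        ∑ n ∈ Finset.Icc (p + 1) (j + p), cesK α n * φ (j + p - n)) ≤ c * (φ j * φ p)

/-- The Weyl sum of order `α`: `W^{-α}f(n) = ∑_{j=n}^∞ k^α(j-n)·f(j)`. -/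
noncomputable def weylSum (α : ℝ) (f : ℕ → ℂ) : ℕ → ℂ :=
  fun n => ∑ᶠ j : ℕ, (cesK α j : ℂ) * f (j + n)

/-- The forward difference operator `Δh(n) = h(n+1) - h(n)`. -/
def fdiff (f : ℕ → ℂ) : ℕ → ℂ := fun n => f (n + 1) - f n

/-- The Weyl difference of order `α > 0`:
`W^α f(n) = (-1)^m Δ^m W^{-(m-α)} f(n)` with `m = [α]+1`; and `W^0 f = f`. -/
noncomputable def weylDiff (α : ℝ) (f : ℕ → ℂ) : ℕ → ℂ :=
  if α = 0 then f
  else fun n => (-1 : ℂ) ^ (⌊α⌋₊ + 1) * fdiff^[⌊α⌋₊ + 1] (weylSum ((⌊α⌋₊ : ℝ) + 1 - α) f) n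

/-- The Cesàro sum of order `α` of a bounded operator `T`:
`Δ^{-α}𝒯(n) = ∑_{j=0}^n k^α(n-j)·T^j`. -/
noncomputable def cesOp {X : Type*} [NormedAddCommGroup X] [NormedSpace ℂ X]
    (α : ℝ) (T : X →L[ℂ] X) (n : ℕ) : X →L[ℂ] X :=
  ∑ j ∈ Finset.range (n + 1), (cesK α (n - j) : ℂ) • T ^ j

/-- The algebra homomorphism `θ(f) = ∑_{n=0}^∞ W^α f(n)·Δ^{-α}𝒯(n)`. -/
noncomputable def theta {X : Type*} [NormedAddCommGroup X] [NormedSpace ℂ X]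
    (α : ℝ) (T : X →L[ℂ] X) (f : ℕ → ℂ) : X →L[ℂ] X :=
  ∑ᶠ n : ℕ, weylDiff α f n • cesOp α T n

lemma cesK_zero (α : ℝ) (hα : 0 < α) : cesK α 0 = 1 := by
  have h := (Real.Gamma_pos_of_pos hα).ne'
  simp [cesK, Real.Gamma_one, h]

lemma cesK_one (n : ℕ) : cesK 1 n = 1 := by
  have h := (Real.Gamma_pos_of_pos (show (0:ℝ) < (n:ℝ)+1 by positivity)).ne'
  simp [cesK, Real.Gamma_one, h]

lemma cesK_succ (γ : ℝ) (hγ : 0 < γ) (n : ℕ) :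
    cesK γ (n+1) = ((n:ℝ) + γ) / ((n:ℝ) + 1) * cesK γ n := by
  unfold cesK
  have h1 : ((n+1:ℕ):ℝ) + γ = ((n:ℝ) + γ) + 1 := by push_cast; ring
  have h2 : ((n+1:ℕ):ℝ) + 1 = ((n:ℝ) + 1) + 1 := by push_cast; ring
  rw [h1, h2, Real.Gamma_add_one (by positivity), Real.Gamma_add_one (by positivity)]
  have hg1 := (Real.Gamma_pos_of_pos (show (0:ℝ) < (n:ℝ)+1 by positivity)).ne'
  have hg2 := (Real.Gamma_pos_of_pos hγ).ne'
  have hn1 : ((n:ℝ)+1) ≠ 0 := by positivity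
  field_simp

lemma cesK_succ' (γ : ℝ) (hγ : 0 < γ) (n : ℕ) :
    ((n:ℝ) + 1) * cesK γ (n+1) = ((n:ℝ) + γ) * cesK γ n := by
  rw [cesK_succ γ hγ n]
  have hn1 : ((n:ℝ)+1) ≠ 0 := by positivity
  field_simp

lemma cesK_vandermonde (a b : ℝ) (ha : 0 < a) (hb : 0 < b) (n : ℕ) :
    ∑ i ∈ range (n+1), cesK a i * cesK b (n - i) = cesK (a+b) n := by
  induction n with
  | zero => simp [cesK_zero a ha, cesK_zero b hb, cesK_zero (a+b) (by positivity)]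
  | succ n ih =>
    have hA : ∑ i ∈ range (n+2), (i:ℝ) * (cesK a i * cesK b (n+1-i))
        = ∑ i ∈ range (n+1), (((i:ℝ)+a) * cesK a i) * cesK b (n-i) := by
      rw [Finset.sum_range_succ' (fun i => (i:ℝ) * (cesK a i * cesK b (n+1-i))) (n+1)]
      simp only [Nat.cast_zero, zero_mul, add_zero]
      refine Finset.sum_congr rfl fun i hi => ?_
      have h1 : n + 1 - (i+1) = n - i := by omega
      have h2 : ((i+1:ℕ):ℝ) = (i:ℝ)+1 := by push_cast; ring
      rw [h1, h2, show ((i:ℝ)+1) * (cesK a (i+1) * cesK b (n-i)) = (((i:ℝ)+1) * cesK a (i+1)) * cesK b (n-i) by ring,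
        cesK_succ' a ha i]
    have hB : ∑ i ∈ range (n+2), ((n+1-i:ℕ):ℝ) * (cesK a i * cesK b (n+1-i))
        = ∑ i ∈ range (n+1), cesK a i * ((((n-i:ℕ):ℝ)+b) * cesK b (n-i)) := by
      rw [Finset.sum_range_succ]
      simp only [Nat.sub_self, Nat.cast_zero, zero_mul, add_zero]
      refine Finset.sum_congr rfl fun i hi => ?_
      have hi' : i ≤ n := by simp at hi; omega
      have h1 : n + 1 - i = (n - i) + 1 := by omega
      have h2 : ((n-i+1:ℕ):ℝ) = ((n-i:ℕ):ℝ)+1 := by push_cast; ring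
      rw [h1, h2]
      have := cesK_succ' b hb (n-i)
      calc (((n-i:ℕ):ℝ)+1) * (cesK a i * cesK b ((n-i)+1))
          = cesK a i * ((((n-i:ℕ):ℝ)+1) * cesK b ((n-i)+1)) := by ring
        _ = cesK a i * ((((n-i:ℕ):ℝ)+b) * cesK b (n-i)) := by rw [this]
    have hS : ((n:ℝ)+1) * ∑ i ∈ range (n+2), cesK a i * cesK b (n+1-i)
        = ((n:ℝ)+(a+b)) * ∑ i ∈ range (n+1), cesK a i * cesK b (n-i) := by
      rw [Finset.mul_sum, Finset.mul_sum]
      have lhs : ∀ i ∈ range (n+2), ((n:ℝ)+1) * (cesK a i * cesK b (n+1-i))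
          = (i:ℝ) * (cesK a i * cesK b (n+1-i)) + ((n+1-i:ℕ):ℝ) * (cesK a i * cesK b (n+1-i)) := by
        intro i hi
        have hi' : i ≤ n+1 := by simp at hi; omega
        have : ((n+1-i:ℕ):ℝ) = ((n:ℝ)+1) - (i:ℝ) := by
          rw [Nat.cast_sub hi']; push_cast; ring
        rw [this]; ring
      rw [Finset.sum_congr rfl lhs, Finset.sum_add_distrib, hA, hB]
      rw [← Finset.sum_add_distrib]
      refine Finset.sum_congr rfl fun i hi => ?_
      have hi' : i ≤ n := by simp at hi; omega
      have : ((n-i:ℕ):ℝ) = (n:ℝ) - (i:ℝ) := by rw [Nat.cast_sub hi']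
      rw [this]; ring
    have hcs := cesK_succ' (a+b) (by positivity) n
    have hn2 : ((n:ℝ)+1) ≠ 0 := by positivity
    have : ((n:ℝ)+1) * ∑ i ∈ range (n+2), cesK a i * cesK b (n+1-i)
        = ((n:ℝ)+1) * cesK (a+b) (n+1) := by
      rw [hS, hcs, ih]
    exact mul_left_cancel₀ hn2 this

lemma weylSum_eq (α : ℝ) (f : ℕ → ℂ) (N : ℕ) (hf : ∀ m, N ≤ m → f m = 0) (n : ℕ) :
    weylSum α f n = ∑ j ∈ range N, (cesK α j : ℂ) * f (j + n) := by
  apply finsum_eq_finset_sum_of_support_subset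
  intro j hj
  simp only [Function.mem_support] at hj
  by_contra h
  simp only [coe_range, Set.mem_Iio, not_lt] at h
  exact hj (by rw [hf (j+n) (by omega)]; ring)

lemma weylSum_vanish (α : ℝ) (f : ℕ → ℂ) (N : ℕ) (hf : ∀ m, N ≤ m → f m = 0)
    (n : ℕ) (hn : N ≤ n) : weylSum α f n = 0 := by
  rw [weylSum_eq α f N hf n]
  refine Finset.sum_eq_zero fun j _ => ?_
  rw [hf (j+n) (by omega)]; ring

lemma fdiff_vanish (f : ℕ → ℂ) (N : ℕ) (hf : ∀ m, N ≤ m → f m = 0)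
    (n : ℕ) (hn : N ≤ n) : fdiff f n = 0 := by
  simp [fdiff, hf n hn, hf (n+1) (by omega)]

lemma fdiff_iter_vanish (f : ℕ → ℂ) (N : ℕ) (hf : ∀ m, N ≤ m → f m = 0) (k : ℕ) :
    ∀ m, N ≤ m → fdiff^[k] f m = 0 := by
  induction k with
  | zero => simpa using hf
  | succ k ih =>
    intro m hm
    rw [Function.iterate_succ_apply']
    exact fdiff_vanish _ N ih m hm

lemma weylSum_fdiff (α : ℝ) (f : ℕ → ℂ) (N : ℕ) (hf : ∀ m, N ≤ m → f m = 0) :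
    weylSum α (fdiff f) = fdiff (weylSum α f) := by
  funext n
  rw [weylSum_eq α (fdiff f) N (fdiff_vanish f N hf) n]
  show _ = weylSum α f (n+1) - weylSum α f n
  rw [weylSum_eq α f N hf (n+1), weylSum_eq α f N hf n, ← Finset.sum_sub_distrib]
  refine Finset.sum_congr rfl fun j _ => ?_
  show (cesK α j : ℂ) * (f (j+n+1) - f (j+n)) = _
  rw [show j + (n+1) = j + n + 1 by omega]
  ring

lemma weylSum_one_fdiff (f : ℕ → ℂ) (N : ℕ) (hf : ∀ m, N ≤ m → f m = 0) :
    weylSum 1 (fdiff f) = fun n => - f n := by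
  funext n
  rw [weylSum_eq 1 (fdiff f) N (fdiff_vanish f N hf) n]
  have : ∀ j ∈ range N, (cesK 1 j : ℂ) * (fdiff f) (j + n) = f (j+1+n) - f (j+n) := by
    intro j _
    rw [cesK_one]
    show (1:ℂ) * (f (j+n+1) - f (j+n)) = _
    rw [show j+1+n = j+n+1 by omega]; ring
  rw [Finset.sum_congr rfl this, Finset.sum_range_sub (fun j => f (j+n))]
  rw [hf (N+n) (by omega)]; ring

lemma weylSum_semigroup (a b : ℝ) (ha : 0 < a) (hb : 0 < b)
    (f : ℕ → ℂ) (N : ℕ) (hf : ∀ m, N ≤ m → f m = 0) :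
    weylSum a (weylSum b f) = weylSum (a+b) f := by
  funext n
  rw [weylSum_eq a (weylSum b f) N (fun m hm => weylSum_vanish b f N hf m hm) n,
    weylSum_eq (a+b) f N hf n]
  have step1 : ∀ i ∈ range N, (cesK a i : ℂ) * weylSum b f (i + n)
      = ∑ j ∈ range N, (cesK a i : ℂ) * ((cesK b j : ℂ) * f (i + j + n)) := by
    intro i _
    rw [weylSum_eq b f N hf (i+n), Finset.mul_sum]
    refine Finset.sum_congr rfl fun j _ => ?_
    rw [show j + (i + n) = i + j + n by omega]
  rw [Finset.sum_congr rfl step1, ← Finset.sum_product']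
  -- now sum over range N ×ˢ range N; restrict to pairs with sum < N
  rw [← Finset.sum_filter_add_sum_filter_not (range N ×ˢ range N) (fun p => p.1 + p.2 < N)]
  have hz : ∑ p ∈ (range N ×ˢ range N).filter (fun p => ¬ p.1 + p.2 < N),
      (cesK a p.1 : ℂ) * ((cesK b p.2 : ℂ) * f (p.1 + p.2 + n)) = 0 := by
    refine Finset.sum_eq_zero fun p hp => ?_
    simp only [mem_filter, not_lt] at hp
    rw [hf (p.1 + p.2 + n) (by omega)]; ring
  rw [hz, add_zero]
  -- bijection with sigma
  rw [show ((range N).sum fun j => (cesK (a+b) j : ℂ) * f (j + n))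
      = ∑ q ∈ (range N).sigma (fun s => range (s+1)),
        (cesK a q.2 : ℂ) * ((cesK b (q.1 - q.2) : ℂ) * f (q.2 + (q.1 - q.2) + n)) from ?_]
  · apply Finset.sum_nbij' (fun p => ⟨p.1 + p.2, p.1⟩) (fun q => (q.2, q.1 - q.2))
    · intro p hp; simp only [mem_filter, mem_product, mem_range, mem_sigma] at hp ⊢; omega
    · intro q hq; simp only [mem_filter, mem_product, mem_range, mem_sigma] at hq ⊢; omega
    · intro p hp; simp only [mem_filter, mem_product, mem_range] at hp
      simp only [Nat.add_sub_cancel_left]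
    · intro q hq; simp only [mem_sigma, mem_range] at hq
      have : q.2 + (q.1 - q.2) = q.1 := by omega
      simp [this]
    · intro p hp
      simp only [Nat.add_sub_cancel_left]
  · rw [Finset.sum_sigma]
    refine Finset.sum_congr rfl fun s hs => ?_
    have inner : ∀ i ∈ range (s+1), (cesK a i : ℂ) * ((cesK b (s - i) : ℂ) * f (i + (s-i) + n))
        = ((cesK a i * cesK b (s-i) : ℝ) : ℂ) * f (s + n) := by
      intro i hi
      simp only [mem_range] at hi
      rw [show i + (s - i) = s by omega]
      push_cast; ring
    rw [Finset.sum_congr rfl inner, ← Finset.sum_mul, ← Complex.ofReal_sum,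
      cesK_vandermonde a b ha hb s]

lemma weylSum_fdiff_iter (α : ℝ) (k : ℕ) :
    ∀ (f : ℕ → ℂ) (N : ℕ), (∀ m, N ≤ m → f m = 0) →
      weylSum α (fdiff^[k] f) = fdiff^[k] (weylSum α f) := by
  induction k with
  | zero => intro f N hf; rfl
  | succ k ih =>
    intro f N hf
    rw [Function.iterate_succ_apply, Function.iterate_succ_apply,
      ih (fdiff f) N (fdiff_vanish f N hf), weylSum_fdiff α f N hf]

lemma key_iter (k : ℕ) (hk : 1 ≤ k) :
    ∀ (f : ℕ → ℂ) (N : ℕ), (∀ m, N ≤ m → f m = 0) →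
      fdiff^[k] (weylSum (k:ℝ) f) = fun n => (-1:ℂ)^k * f n := by
  induction k, hk using Nat.le_induction with
  | base =>
    intro f N hf
    rw [Function.iterate_one, Nat.cast_one, ← weylSum_fdiff 1 f N hf, weylSum_one_fdiff f N hf]
    funext n; simp
  | succ k hk ih =>
    intro f N hf
    have h1 : weylSum ((k:ℕ)+1:ℝ) f = weylSum (k:ℝ) (weylSum 1 f) := by
      rw [weylSum_semigroup (k:ℝ) 1 (by exact_mod_cast hk) one_pos f N hf]
    have hcast : (((k+1:ℕ)):ℝ) = ((k:ℕ):ℝ) + 1 := by push_cast; ring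
    rw [hcast, h1, Function.iterate_succ_apply',
      ih (weylSum 1 f) N (fun m hm => weylSum_vanish 1 f N hf m hm)]
    funext n
    have : fdiff (fun n => (-1:ℂ)^k * weylSum 1 f n) n
        = (-1:ℂ)^k * fdiff (weylSum 1 f) n := by
      simp only [fdiff]; ring
    rw [this, ← weylSum_fdiff 1 f N hf, weylSum_one_fdiff f N hf]
    simp only [pow_succ]
    ring

lemma weylDiff_vanish (α : ℝ) (hα : 0 < α) (f : ℕ → ℂ) (N : ℕ)
    (hf : ∀ m, N ≤ m → f m = 0) (n : ℕ) (hn : N ≤ n) : weylDiff α f n = 0 := by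
  rw [weylDiff, if_neg hα.ne']
  rw [fdiff_iter_vanish (weylSum ((⌊α⌋₊ : ℝ) + 1 - α) f) N
    (fun m hm => weylSum_vanish _ f N hf m hm) _ n hn]
  ring

lemma inversion (α : ℝ) (hα : 0 < α) (f : ℕ → ℂ) (N : ℕ)
    (hf : ∀ m, N ≤ m → f m = 0) :
    weylSum α (weylDiff α f) = f := by
  set m := ⌊α⌋₊ + 1 with hm
  set β := (⌊α⌋₊ : ℝ) + 1 - α with hβdef
  have hβ : 0 < β := by
    have := Nat.lt_floor_add_one α
    simp only [hβdef]; linarith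
  have hab : α + β = (m:ℝ) := by rw [hβdef, hm]; push_cast; ring
  have hWD : weylDiff α f = fun n => (-1:ℂ)^m * fdiff^[m] (weylSum β f) n := by
    rw [weylDiff, if_neg hα.ne']
  funext n
  rw [hWD]
  have hg : ∀ k, N ≤ k → fdiff^[m] (weylSum β f) k = 0 :=
    fdiff_iter_vanish _ N (fun k hk => weylSum_vanish β f N hf k hk) m
  have hsmul : weylSum α (fun n => (-1:ℂ)^m * fdiff^[m] (weylSum β f) n) n
      = (-1:ℂ)^m * weylSum α (fdiff^[m] (weylSum β f)) n := by
    rw [weylSum_eq α _ N (fun k hk => by rw [hg k hk]; ring) n,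
      weylSum_eq α _ N hg n, Finset.mul_sum]
    refine Finset.sum_congr rfl fun j _ => ?_; ring
  rw [hsmul, weylSum_fdiff_iter α m (weylSum β f) N
      (fun k hk => weylSum_vanish β f N hf k hk),
    weylSum_semigroup α β hα hβ f N hf, hab,
    key_iter m (by omega) f N hf]
  rw [← mul_assoc, ← mul_pow]
  simp

lemma theta_eq {X : Type*} [NormedAddCommGroup X] [NormedSpace ℂ X]
    (α : ℝ) (hα : 0 < α) (T : X →L[ℂ] X) (f : ℕ → ℂ) (N : ℕ)
    (hf : ∀ m, N ≤ m → f m = 0) :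
    theta α T f = ∑ j ∈ range N, f j • T ^ j := by
  have hWD := weylDiff_vanish α hα f N hf
  have h1 : theta α T f = ∑ n ∈ range N, weylDiff α f n • cesOp α T n := by
    apply finsum_eq_finset_sum_of_support_subset
    intro n hn
    simp only [Function.mem_support] at hn
    by_contra h
    simp only [coe_range, Set.mem_Iio, not_lt] at h
    exact hn (by rw [hWD n h, zero_smul])
  rw [h1]
  have h2 : ∀ n ∈ range N, weylDiff α f n • cesOp α T n
      = ∑ j ∈ range N, (if j ≤ n then weylDiff α f n * (cesK α (n-j) : ℂ) else 0) • T ^ j := by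
    intro n hn
    simp only [mem_range] at hn
    rw [cesOp, Finset.smul_sum]
    have hfil : (range N).filter (fun j => j ≤ n) = range (n+1) := by
      ext j; simp only [mem_filter, mem_range]; omega
    have hstep : ∑ j ∈ range N, (if j ≤ n then weylDiff α f n * (cesK α (n-j):ℂ) else 0) • T ^ j
        = ∑ j ∈ range (n+1), (weylDiff α f n * (cesK α (n-j):ℂ)) • T ^ j := by
      simp only [ite_smul, zero_smul]
      rw [← Finset.sum_filter, hfil]
    rw [hstep]
    exact Finset.sum_congr rfl fun j _ => smul_smul _ _ _
  rw [Finset.sum_congr rfl h2, Finset.sum_comm]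
  refine Finset.sum_congr rfl fun j hj => ?_
  simp only [mem_range] at hj
  have h3 : ∑ n ∈ range N, (if j ≤ n then weylDiff α f n * (cesK α (n-j) : ℂ) else 0) • T ^ j
      = (∑ n ∈ range N, if j ≤ n then weylDiff α f n * (cesK α (n-j) : ℂ) else 0) • T ^ j := by
    rw [Finset.sum_smul]
  rw [h3]
  congr 1
  rw [← Finset.sum_filter]
  have hfil : (range N).filter (fun n => j ≤ n) = Finset.Ico j N := by
    ext n; simp only [mem_filter, mem_range, mem_Ico]; omega
  rw [hfil, Finset.sum_Ico_eq_sum_range]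
  have h4 : ∀ i ∈ range (N - j), weylDiff α f (j+i) * (cesK α ((j+i)-j) : ℂ)
      = (cesK α i : ℂ) * weylDiff α f (i+j) := by
    intro i _
    rw [show (j+i)-j = i by omega, show j+i = i+j by omega]; ring
  rw [Finset.sum_congr rfl h4]
  have h5 : ∑ i ∈ range (N-j), (cesK α i : ℂ) * weylDiff α f (i+j)
      = ∑ i ∈ range N, (cesK α i : ℂ) * weylDiff α f (i+j) := by
    apply Finset.sum_subset (by apply Finset.range_subset_range.2; omega)
    intro i _ hi
    simp only [mem_range, not_lt] at hi
    rw [weylDiff_vanish α hα f N hf (i+j) (by omega)]; ring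
  rw [h5, ← weylSum_eq α (weylDiff α f) N (fun m hm => weylDiff_vanish α hα f N hf m hm) j,
    inversion α hα f N hf]

theorem stmt16 {X : Type*} [NormedAddCommGroup X] [NormedSpace ℂ X] [CompleteSpace X]
    (α : ℝ) (hα : 0 < α) (φ : ℕ → ℝ) (hφpos : ∀ n, 0 < φ n) (c : ℝ) (hc : 0 < c)
    (hφ : omegaLoc α φ c) (T : X →L[ℂ] X) (C : ℝ) (hC : 0 < C)
    (hT : ∀ n : ℕ, ‖cesOp α T n‖ ≤ C * φ n)
    (f : ℕ → ℂ) (hf : (Function.support f).Finite) (x : X) :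
    T (theta α T (fun n => f (n + 1) - f n) x) =
      (1 - T) (theta α T f x) - f 0 • x := by
  obtain ⟨N, hN⟩ : ∃ N, ∀ m, N ≤ m → f m = 0 := by
    refine ⟨hf.toFinset.sup id + 1, fun m hm => ?_⟩
    by_contra h
    have hmem : m ∈ hf.toFinset := by simpa [Function.mem_support] using h
    have := Finset.le_sup (f := id) hmem
    simp only [id] at this
    omega
  have hg : ∀ m, N ≤ m → (fun n => f (n+1) - f n) m = 0 := by
    intro m hm; simp only; rw [hN m hm, hN (m+1) (by omega), sub_zero]
  rw [theta_eq α hα T _ N hg, theta_eq α hα T f N hN]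
  simp only [ContinuousLinearMap.sum_apply, ContinuousLinearMap.smul_apply,
    ContinuousLinearMap.sub_apply, ContinuousLinearMap.one_apply]
  rw [map_sum]
  have hL : ∀ j ∈ range N, T ((f (j+1) - f j) • (T^j) x)
      = f (j+1) • (T^(j+1)) x - f j • (T^(j+1)) x := by
    intro j _
    rw [map_smul, sub_smul]
    congr 1 <;>
    · rw [pow_succ', ContinuousLinearMap.mul_apply]
  rw [Finset.sum_congr rfl hL, Finset.sum_sub_distrib]
  have hmap : T (∑ j ∈ range N, f j • (T^j) x) = ∑ j ∈ range N, f j • (T^(j+1)) x := by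
    rw [map_sum]
    refine Finset.sum_congr rfl fun j _ => ?_
    rw [map_smul, pow_succ', ContinuousLinearMap.mul_apply]
  rw [hmap]
  have hshift : ∑ j ∈ range N, f (j+1) • (T^(j+1)) x
      = (∑ j ∈ range N, f j • (T^j) x) - f 0 • x := by
    have h0 : ∑ j ∈ range (N+1), f j • (T^j) x
        = (∑ j ∈ range N, f (j+1) • (T^(j+1)) x) + f 0 • (T^0) x :=
      Finset.sum_range_succ' (fun j => f j • (T^j) x) N
    rw [Finset.sum_range_succ, hN N le_rfl, zero_smul, add_zero] at h0
    rw [h0, pow_zero, ContinuousLinearMap.one_apply]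
    abel
  rw [hshift]
  abel
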